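/- Let M_b = [[10,6],[6,10]] and let v = (x,y)^T ∈ ℚ^2 with x,y ≠ 0 and either |y|/|x| < 1/3 or |y|/|x| > 3. Then for every nonzero integer m, the vector M_b^m v = (x',y')^T satisfies x',y' ≠ 0, and 1/3 < y'/x' < 3 if m ≥ 1, while −3 < y'/x' < −1/3 if m ≤ −1. -/

import Mathlib

/-- `M_b = [[10,6],[6,10]]` as an element of `GL₂(ℚ)`. -/
noncomputable def Mb : GL (Fin 2) ℚ :=
  Matrix.GeneralLinearGroup.mkOfDetNeZero !![10, 6; 6, 10]
    (by norm_num [Matrix.det_fin_two_of])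

/-- Candidate formula for the matrix of `Mb ^ m`. -/
noncomputable def MbN (m : ℤ) : Matrix (Fin 2) (Fin 2) ℚ :=
  !![((16:ℚ)^m + 4^m)/2, ((16:ℚ)^m - 4^m)/2;
     ((16:ℚ)^m - 4^m)/2, ((16:ℚ)^m + 4^m)/2]

lemma MbN_mul (a b : ℤ) : MbN a * MbN b = MbN (a + b) := by
  have h16 : (16:ℚ) ≠ 0 := by norm_num
  have h4 : (4:ℚ) ≠ 0 := by norm_num
  simp only [MbN, Matrix.mul_fin_two]
  rw [zpow_add₀ h16, zpow_add₀ h4]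
  ext i j
  fin_cases i <;> fin_cases j <;> simp <;> ring

lemma MbN_zero : MbN 0 = 1 := by
  simp only [MbN, zpow_zero]
  norm_num
  exact Matrix.one_fin_two.symm

lemma MbN_one : MbN 1 = !![10, 6; 6, 10] := by
  simp only [MbN, zpow_one]
  norm_num

lemma Mb_coe : (Mb : Matrix (Fin 2) (Fin 2) ℚ) = MbN 1 := by
  rw [MbN_one]; rfl

lemma Mb_inv_coe : ((Mb⁻¹ : GL (Fin 2) ℚ) : Matrix (Fin 2) (Fin 2) ℚ) = MbN (-1) := by
  have h : (Mb : Matrix (Fin 2) (Fin 2) ℚ) * MbN (-1) = 1 := by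
    rw [Mb_coe, MbN_mul]; norm_num; exact MbN_zero
  rw [Matrix.coe_units_inv, Matrix.inv_eq_right_inv h]

lemma Mb_zpow (m : ℤ) : ((Mb ^ m : GL (Fin 2) ℚ) : Matrix (Fin 2) (Fin 2) ℚ) = MbN m := by
  induction m using Int.induction_on with
  | zero => simpa using MbN_zero.symm
  | succ k ih =>
    rw [zpow_add_one, Units.val_mul, ih, Mb_coe, MbN_mul]
  | pred k ih =>
    rw [zpow_sub_one, Units.val_mul, ih, Mb_inv_coe, MbN_mul,
      show (-(k:ℤ) + -1) = -(k:ℤ) - 1 by ring]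

lemma ratio_pos' (X Y : ℚ) (hX : 0 < X) (h : 3*X^2 - 10*X*Y + 3*Y^2 < 0) :
    1/3 < Y/X ∧ Y/X < 3 := by
  have hY : 0 < Y := by nlinarith
  constructor
  · rw [lt_div_iff₀ hX]; nlinarith
  · rw [div_lt_iff₀ hX]; nlinarith

lemma ratio_full (X Y : ℚ) (hX : X ≠ 0) (h : 3*X^2 - 10*X*Y + 3*Y^2 < 0) :
    1/3 < Y/X ∧ Y/X < 3 := by
  rcases hX.lt_or_gt with h1 | h1
  · have := ratio_pos' (-X) (-Y) (by linarith) (by nlinarith)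
    rwa [neg_div_neg_eq] at this
  · exact ratio_pos' X Y h1 h

lemma main_pos (x y x' y' b : ℚ) (hbge : 4 ≤ b)
    (hP2 : (x-y)^2 < 4*(x+y)^2)
    (ex' : x' = (b^2*(x+y) + b*(x-y))/2)
    (ey' : y' = (b^2*(x+y) - b*(x-y))/2) :
    x' ≠ 0 ∧ y' ≠ 0 ∧ (1/3 < y'/x' ∧ y'/x' < 3) := by
  have he0 : (0:ℚ) < b^2 := by nlinarith
  have hb2 : (16:ℚ) ≤ b^2 := by nlinarith
  have hneg : 3*x'^2 - 10*x'*y' + 3*y'^2 < 0 := by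
    have hkey : 3*x'^2 - 10*x'*y' + 3*y'^2
        = 4*b^2*(x-y)^2 - (b^2)^2*(x+y)^2 := by
      rw [ex', ey']; ring
    rw [hkey]
    have hA : 4*b^2*(x-y)^2 < 16*b^2*(x+y)^2 := by
      nlinarith [mul_pos he0 (show (0:ℚ) < 4*(x+y)^2 - (x-y)^2 by linarith)]
    have hB : 16*b^2*(x+y)^2 ≤ (b^2)^2*(x+y)^2 := by
      nlinarith [mul_nonneg (mul_nonneg (show (0:ℚ) ≤ b^2 - 16 by linarith) he0.le)
        (sq_nonneg (x+y))]
    linarith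
  have hx0 : x' ≠ 0 := by intro h0; rw [h0] at hneg; nlinarith [sq_nonneg y']
  have hy0 : y' ≠ 0 := by intro h0; rw [h0] at hneg; nlinarith [sq_nonneg x']
  exact ⟨hx0, hy0, ratio_full x' y' hx0 hneg⟩

lemma main_neg (x y x' y' b : ℚ) (hb0 : 0 < b) (hble : b ≤ 1/4)
    (hP1 : (x+y)^2 < 4*(x-y)^2)
    (ex' : x' = (b^2*(x+y) + b*(x-y))/2)
    (ey' : y' = (b^2*(x+y) - b*(x-y))/2) :
    x' ≠ 0 ∧ y' ≠ 0 ∧ (-3 < y'/x' ∧ y'/x' < -(1/3)) := by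
  have he0 : (0:ℚ) < b^2 := by positivity
  have hb2 : b^2 ≤ 1/16 := by nlinarith
  have hneg : 3*x'^2 + 10*x'*y' + 3*y'^2 < 0 := by
    have hkey : 3*x'^2 + 10*x'*y' + 3*y'^2
        = 4*(b^2)^2*(x+y)^2 - b^2*(x-y)^2 := by
      rw [ex', ey']; ring
    rw [hkey]
    have hA : 4*(b^2)^2*(x+y)^2 ≤ (1/4)*(b^2*(x+y)^2) := by
      nlinarith [mul_nonneg (show (0:ℚ) ≤ 1/16 - b^2 by linarith)
        (mul_nonneg he0.le (sq_nonneg (x+y)))]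
    have hB : (1/4)*(b^2*(x+y)^2) < b^2*(x-y)^2 := by
      nlinarith [mul_pos he0 (show (0:ℚ) < 4*(x-y)^2 - (x+y)^2 by linarith)]
    linarith
  have hx0 : x' ≠ 0 := by intro h0; rw [h0] at hneg; nlinarith [sq_nonneg y']
  have hy0 : y' ≠ 0 := by intro h0; rw [h0] at hneg; nlinarith [sq_nonneg x']
  obtain ⟨r1, r2⟩ := ratio_full x' (-y') hx0 (by nlinarith)
  rw [neg_div] at r1 r2
  exact ⟨hx0, hy0, by constructor <;> linarith⟩

lemma hyp_conv (x y : ℚ) (hx : x ≠ 0) (hy : y ≠ 0)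
    (h : |y| / |x| < 1 / 3 ∨ 3 < |y| / |x|) :
    (x+y)^2 < 4*(x-y)^2 ∧ (x-y)^2 < 4*(x+y)^2 := by
  have hax : (0:ℚ) < |x| := abs_pos.2 hx
  have hay : (0:ℚ) < |y| := abs_pos.2 hy
  rcases h with h1 | h1
  · have h2 : |y| < 1/3 * |x| := (div_lt_iff₀ hax).mp h1
    have h9 : 9*y^2 < x^2 := by
      nlinarith [sq_abs x, sq_abs y,
        mul_pos (show (0:ℚ) < |x| - 3*|y| by linarith)
          (show (0:ℚ) < |x| + 3*|y| by linarith)]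
    constructor
    · nlinarith [sq_nonneg (x - 3*y)]
    · nlinarith [sq_nonneg (x + 3*y)]
  · have h2 : 3 * |x| < |y| := by
      have := (lt_div_iff₀ hax).mp h1; linarith
    have h9 : 9*x^2 < y^2 := by
      nlinarith [sq_abs x, sq_abs y,
        mul_pos (show (0:ℚ) < |y| - 3*|x| by linarith)
          (show (0:ℚ) < |y| + 3*|x| by linarith)]
    constructor
    · nlinarith [sq_nonneg (3*x - y)]
    · nlinarith [sq_nonneg (3*x + y)]

/-- If `x, y ≠ 0` and `|y|/|x| < 1/3` or `|y|/|x| > 3`, then for every nonzero integer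
`m`, writing `(x', y')ᵀ = M_bᵐ (x, y)ᵀ`, we have `x', y' ≠ 0`, with
`1/3 < y'/x' < 3` if `m ≥ 1` and `-3 < y'/x' < -1/3` if `m ≤ -1`. -/
theorem Mb_power_pingpong (x y : ℚ) (hx : x ≠ 0) (hy : y ≠ 0)
    (h : |y| / |x| < 1 / 3 ∨ 3 < |y| / |x|) (m : ℤ) (hm : m ≠ 0) :
    ∀ x' y' : ℚ,
      x' = ((Mb ^ m : GL (Fin 2) ℚ) : Matrix (Fin 2) (Fin 2) ℚ).mulVec ![x, y] 0 →
      y' = ((Mb ^ m : GL (Fin 2) ℚ) : Matrix (Fin 2) (Fin 2) ℚ).mulVec ![x, y] 1 →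
      x' ≠ 0 ∧ y' ≠ 0 ∧
        (1 ≤ m → 1 / 3 < y' / x' ∧ y' / x' < 3) ∧
        (m ≤ -1 → -3 < y' / x' ∧ y' / x' < -(1 / 3)) := by
  intro x' y' hx' hy'
  rw [Mb_zpow] at hx' hy'
  have ex : x' = (((16:ℚ)^m + 4^m)/2)*x + (((16:ℚ)^m - 4^m)/2)*y := by
    rw [hx']; simp [MbN, Matrix.mulVec, dotProduct, Fin.sum_univ_two]
  have ey : y' = (((16:ℚ)^m - 4^m)/2)*x + (((16:ℚ)^m + 4^m)/2)*y := by
    rw [hy']; simp [MbN, Matrix.mulVec, dotProduct, Fin.sum_univ_two]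
  have hb0 : (0:ℚ) < (4:ℚ)^m := zpow_pos (by norm_num) m
  have h16 : (16:ℚ)^m = ((4:ℚ)^m)^2 := by
    rw [show (16:ℚ) = 4*4 by norm_num, mul_zpow]; exact (sq _).symm
  have ex' : x' = (((4:ℚ)^m)^2*(x+y) + ((4:ℚ)^m)*(x-y))/2 := by rw [ex, h16]; ring
  have ey' : y' = (((4:ℚ)^m)^2*(x+y) - ((4:ℚ)^m)*(x-y))/2 := by rw [ey, h16]; ring
  obtain ⟨hP1, hP2⟩ := hyp_conv x y hx hy h
  rcases hm.lt_or_gt with hm1 | hm1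
  · have hmle : m ≤ -1 := by omega
    have hble : (4:ℚ)^m ≤ 1/4 := by
      have := zpow_le_zpow_right₀ (show (1:ℚ) ≤ 4 by norm_num) hmle
      rwa [zpow_neg_one, show ((4:ℚ))⁻¹ = 1/4 by norm_num] at this
    obtain ⟨h1, h2, h3⟩ := main_neg x y x' y' _ hb0 hble hP1 ex' ey'
    exact ⟨h1, h2, fun hc => absurd hc (by omega), fun _ => h3⟩
  · have hmge : 1 ≤ m := by omega
    have hbge : (4:ℚ) ≤ (4:ℚ)^m := by
      have := zpow_le_zpow_right₀ (show (1:ℚ) ≤ 4 by norm_num) hmge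
      rwa [zpow_one] at this
    obtain ⟨h1, h2, h3⟩ := main_pos x y x' y' _ hbge hP2 ex' ey'
    exact ⟨h1, h2, fun _ => h3, fun hc => absurd hc (by omega)⟩
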